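/- Let A be a C*-algebra, D a C*-subalgebra, and let x = (x_{ij}) ∈ Mₙ(A). Then x satisfies x*(Dₙ ⊗ D)x ⊆ Dₙ ⊗ D (x is an r-normalizer of the diagonal subalgebra Dₙ ⊗ D in Mₙ(A)) if and only if (a) each entry x_{ij} satisfies x_{ij}*Dx_{ij} ⊆ D, and (b) for all i ≠ j, all k, and all a ∈ D, x_{ki}* a x_{kj} = 0. -/
import Mathlib

/-- Entry formula for conjugation by a rank-one-type diagonal matrix. -/
lemma entry_formula {A : Type*} [NonUnitalCStarAlgebra A] (n : ℕ)
    (x : Matrix (Fin n) (Fin n) A) (k : Fin n) (d : A) (i j : Fin n) :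
    (star x * Matrix.single k k d * x) i j = star (x k i) * d * x k j := by
  simp only [Matrix.mul_apply, Matrix.star_apply, Matrix.single, Matrix.of_apply]
  rw [Finset.sum_eq_single k]
  · rw [Finset.sum_eq_single k]
    · simp
    · intro p _ hp
      rw [if_neg (fun h => absurd h.1.symm hp), mul_zero]
    · simp
  · intro q _ hq
    rw [Finset.sum_eq_zero, zero_mul]
    intro p _
    rw [if_neg (fun h : k = p ∧ k = q => absurd h.2.symm hq), mul_zero]
  · simp

/-- a matrix `x ∈ Mₙ(A)` is an r-normalizer of the diagonal subalgebra
`Dₙ ⊗ D` iff each entry is an r-normalizer of `D` and the columns are `D`-orthogonal. -/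
theorem matrix_rNormalizer_iff {A : Type*} [NonUnitalCStarAlgebra A]
    (D : NonUnitalStarSubalgebra ℂ A) (hD : IsClosed (D : Set A))
    (n : ℕ) (x : Matrix (Fin n) (Fin n) A) :
    (∀ b : Matrix (Fin n) (Fin n) A, (∀ i, b i i ∈ D) → (∀ i j, i ≠ j → b i j = 0) →
      (∀ i, (star x * b * x) i i ∈ D) ∧ (∀ i j, i ≠ j → (star x * b * x) i j = 0)) ↔
    ((∀ i j, ∀ d ∈ D, star (x i j) * d * x i j ∈ D) ∧
     (∀ i j k, i ≠ j → ∀ a ∈ D, star (x k i) * a * x k j = 0)) := by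
  have hdiagmem : ∀ (k : Fin n) (d : A), d ∈ D →
      ∀ m, Matrix.single k k d m m ∈ D := by
    intro k d hd m
    simp only [Matrix.single, Matrix.of_apply]
    split
    · exact hd
    · exact D.zero_mem
  have hoffzero : ∀ (k : Fin n) (d : A), ∀ p q : Fin n, p ≠ q →
      Matrix.single k k d p q = 0 := by
    intro k d p q hpq
    simp only [Matrix.single, Matrix.of_apply]
    rw [if_neg]
    rintro ⟨hp, hq⟩
    exact hpq (hp.symm.trans hq)
  constructor
  · intro h
    constructor
    · intro i j d hd
      have hb := h (Matrix.single i i d) (hdiagmem i d hd) (hoffzero i d)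
      have := hb.1 j
      rwa [entry_formula] at this
    · intro i j k hij a ha
      have hb := h (Matrix.single k k a) (hdiagmem k a ha) (hoffzero k a)
      have := hb.2 i j hij
      rwa [entry_formula] at this
  · rintro ⟨h1, h2⟩ b hdiag hoff
    have key : ∀ i j, (star x * b * x) i j = ∑ k, star (x k i) * b k k * x k j := by
      intro i j
      simp only [Matrix.mul_apply, Matrix.star_apply]
      refine Finset.sum_congr rfl fun k _ => ?_
      congr 1
      rw [Finset.sum_eq_single k]
      · intro p _ hp
        rw [hoff p k hp, mul_zero]
      · simp
    constructor
    · intro i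
      rw [key]
      exact sum_mem (fun k _ => h1 k i (b k k) (hdiag k))
    · intro i j hij
      rw [key]
      exact Finset.sum_eq_zero fun k _ => h2 i j k hij (b k k) (hdiag k)
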